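/- An element u₀ ∈ U minimizes J over U (i.e., J(u₀) ≤ J(u) for all u ∈ U) if and only if ρ·u₀ + T*(T u₀) − T* θ = 0, where T* : H → U denotes the Hilbert-space adjoint of T. -/

import Mathlib

open ContinuousLinearMap

/-- `u₀` minimizes `J u = ‖T u - θ‖² + ρ‖u‖²` over `U` if and only if
`ρ • u₀ + T* (T u₀) - T* θ = 0`, where `T*` is the Hilbert-space adjoint of `T`. -/
theorem minimizer_iff_normal_equation
    {U H : Type*} [NormedAddCommGroup U] [InnerProductSpace ℝ U] [CompleteSpace U]
    [NormedAddCommGroup H] [InnerProductSpace ℝ H] [CompleteSpace H]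
    (T : U →L[ℝ] H) (ρ : ℝ) (hρ : 0 < ρ) (θ : H) (u₀ : U) :
    (∀ u : U, ‖T u₀ - θ‖ ^ 2 + ρ * ‖u₀‖ ^ 2 ≤ ‖T u - θ‖ ^ 2 + ρ * ‖u‖ ^ 2) ↔
      ρ • u₀ + adjoint T (T u₀) - adjoint T θ = 0 := by
  set g : U := ρ • u₀ + adjoint T (T u₀) - adjoint T θ with hg
  have key : ∀ v : U, ‖T (u₀ + v) - θ‖ ^ 2 + ρ * ‖u₀ + v‖ ^ 2
      = (‖T u₀ - θ‖ ^ 2 + ρ * ‖u₀‖ ^ 2) + 2 * (inner ℝ g v : ℝ)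
        + (‖T v‖ ^ 2 + ρ * ‖v‖ ^ 2) := by
    intro v
    have h1 : T (u₀ + v) - θ = (T u₀ - θ) + T v := by rw [map_add]; abel
    have h2 : (inner ℝ g v : ℝ)
        = inner ℝ (T u₀ - θ) (T v) + ρ * inner ℝ u₀ v := by
      rw [hg]
      rw [inner_sub_left, inner_add_left, real_inner_smul_left,
        adjoint_inner_left, adjoint_inner_left, inner_sub_left]
      ring
    rw [h1, norm_add_sq_real, norm_add_sq_real, h2]
    ring
  constructor
  · intro hmin
    have hgg : ‖g‖ ^ 2 = 0 := by
      set a : ℝ := ‖g‖ ^ 2 with ha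
      set b : ℝ := ‖T g‖ ^ 2 + ρ * ‖g‖ ^ 2 with hb
      have hbnn : 0 ≤ b := by positivity
      have hann : 0 ≤ a := by positivity
      set t : ℝ := -a / (b + 1) with ht
      have := hmin (u₀ + t • g)
      rw [key (t • g)] at this
      have hinner : (inner ℝ g (t • g) : ℝ) = t * a := by
        rw [real_inner_smul_right, real_inner_self_eq_norm_sq]
      have hTv : ‖T (t • g)‖ ^ 2 = t ^ 2 * ‖T g‖ ^ 2 := by
        rw [map_smul, norm_smul]
        rw [mul_pow, Real.norm_eq_abs, sq_abs]
      have hnv : ‖t • g‖ ^ 2 = t ^ 2 * ‖g‖ ^ 2 := by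
        rw [norm_smul]
        rw [mul_pow, Real.norm_eq_abs, sq_abs]
      rw [hinner, hTv, hnv] at this
      -- this : X ≤ X + 2*(t*a) + (t^2*‖Tg‖^2 + ρ*(t^2*‖g‖^2))
      have h3 : 0 ≤ 2 * (t * a) + t ^ 2 * b := by
        have : 0 ≤ 2 * (t * a) + (t ^ 2 * ‖T g‖ ^ 2 + ρ * (t ^ 2 * ‖g‖ ^ 2)) := by
          linarith
        calc (0:ℝ) ≤ 2 * (t * a) + (t ^ 2 * ‖T g‖ ^ 2 + ρ * (t ^ 2 * ‖g‖ ^ 2)) := this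
        _ = 2 * (t * a) + t ^ 2 * b := by rw [hb]; ring
      have hbpos : (0:ℝ) < b + 1 := by linarith
      have ht2 : t = -a / (b + 1) := ht
      rw [ht2] at h3
      have h4 : 0 ≤ (-(2 * a ^ 2 * (b + 1)) + a ^ 2 * b) / (b + 1) ^ 2 := by
        have : (2 * (-a / (b + 1) * a) + (-a / (b + 1)) ^ 2 * b)
            = (-(2 * a ^ 2 * (b + 1)) + a ^ 2 * b) / (b + 1) ^ 2 := by
          field_simp
        linarith [h3, this.symm.le, this.le]
      have h5 : 0 ≤ -(2 * a ^ 2 * (b + 1)) + a ^ 2 * b := by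
        by_contra hneg
        push_neg at hneg
        have := div_neg_of_neg_of_pos hneg (by positivity : (0:ℝ) < (b+1)^2)
        linarith
      nlinarith [sq_nonneg a]
    have : g = 0 := by
      have : ‖g‖ = 0 := by nlinarith [norm_nonneg g]
      exact norm_eq_zero.mp this
    exact this
  · intro h0 u
    have := key (u - u₀)
    simp only [add_sub_cancel] at this
    rw [this, h0]
    simp only [inner_zero_left]
    nlinarith [sq_nonneg ‖T (u - u₀)‖, sq_nonneg ‖u - u₀‖, hρ.le, mul_nonneg hρ.le (sq_nonneg ‖u - u₀‖)]
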